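/- Fix an integer d ≥ 1, let β > 1/2 and let s ≥ 1. There exists a constant C > 0 depending only on β such that: if A : E × E → ℂ is an infinite matrix with |A|_β < ∞, then for every ξ : E → ℂ with Σ_{a∈E} w_a^s |ξ_a|² < ∞, the series (Aξ)_a = Σ_{b∈E} A_a^b ξ_b converges absolutely for every a ∈ E, and Σ_{a∈E} w_a^{−s} |(Aξ)_a|² ≤ C² · |A|_β² · Σ_{a∈E} w_a^s |ξ_a|². That is, A is a bounded operator from ℓ²_s to ℓ²_{−s} with norm at most C·|A|_β. -/

import Mathlib

open scoped Classical

/-- `hermiteDim d j` is the number of `d`-tuples of odd natural numbers summing to `j`,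
i.e. the multiplicity `d_j` of the eigenvalue `j` of the `d`-dimensional harmonic oscillator. -/
noncomputable def hermiteDim (d j : ℕ) : ℕ :=
  ((Finset.univ : Finset (Fin d → Fin (j + 1))).filter
    (fun f => (∀ i, Odd ((f i : ℕ))) ∧ ∑ i, ((f i : ℕ)) = j)).card

/-- The index set `E = {(j, l) : j ∈ Ê, 1 ≤ l ≤ d_j}`, encoded as pairs `⟨k, l⟩` where
`j = d + 2k` runs over `Ê = {d, d+2, …}` and `l` runs over a set of cardinality `d_j`. -/
abbrev IndexE (d : ℕ) : Type := Σ k : ℕ, Fin (hermiteDim d (d + 2 * k))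

/-- The eigenvalue `w_a` attached to `a ∈ E`. -/
def wE (d : ℕ) (a : IndexE d) : ℕ := d + 2 * a.1

/-- The operator norm of the block `A_{[j]}^{[j']}`, `j = d + 2k`, `j' = d + 2k'`, of an
infinite matrix `A : E × E → ℂ`, as a linear map between the corresponding Euclidean spaces. -/
noncomputable def blockNorm (d : ℕ) (A : IndexE d → IndexE d → ℂ) (k k' : ℕ) : ℝ :=
  ‖LinearMap.toContinuousLinearMap (Matrix.toEuclideanLin
      (Matrix.of fun (i : Fin (hermiteDim d (d + 2 * k)))
        (i' : Fin (hermiteDim d (d + 2 * k'))) => A ⟨k, i⟩ ⟨k', i'⟩))‖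

/-- The weight `(1 + ln j)^β (1 + ln j')^β` with `j = d + 2k`, `j' = d + 2k'`. -/
noncomputable def wtBeta (d : ℕ) (β : ℝ) (k k' : ℕ) : ℝ :=
  (1 + Real.log ((d : ℝ) + 2 * k)) ^ β * (1 + Real.log ((d : ℝ) + 2 * k')) ^ β

/-- The weight `(1 + |j - j'|)(1 + ln j)^β (1 + ln j')^β` with `j = d + 2k`, `j' = d + 2k'`. -/
noncomputable def wtBetaPlus (d : ℕ) (β : ℝ) (k k' : ℕ) : ℝ :=
  (1 + |((d : ℝ) + 2 * k) - ((d : ℝ) + 2 * k')|) * wtBeta d β k k'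


set_option maxHeartbeats 1600000

namespace Stmt8Aux


/-- Summability of `1/(n (1+log n)^(2β))` for `β > 1/2`. -/
lemma logSeries_summable {β : ℝ} (hβ : 1/2 < β) :
    Summable (fun n : ℕ => ((n : ℝ) * (1 + Real.log n) ^ (2*β))⁻¹) := by
  have h2β : 1 < 2*β := by linarith
  have hb : (0:ℝ) < 2*β := by linarith
  have hmono : ∀ ⦃m n : ℕ⦄, 0 < m → m ≤ n →
      ((n : ℝ) * (1 + Real.log n) ^ (2*β))⁻¹ ≤ ((m : ℝ) * (1 + Real.log m) ^ (2*β))⁻¹ := by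
    intro m n hm hmn
    have hm1 : (1:ℝ) ≤ m := by exact_mod_cast hm
    have hmn' : (m:ℝ) ≤ n := by exact_mod_cast hmn
    have hlogm : 0 ≤ Real.log m := Real.log_nonneg hm1
    apply inv_anti₀
    · positivity
    · have := Real.log_le_log (by linarith) hmn'
      gcongr <;> linarith
  rw [← summable_condensed_iff_of_nonneg (fun n => by positivity) hmono]
  have key : ∀ n : ℕ, (2:ℝ)^n * (((2^n : ℕ) : ℝ) * (1 + Real.log (2^n : ℕ)) ^ (2*β))⁻¹
      = ((1 + n * Real.log 2) ^ (2*β))⁻¹ := by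
    intro n
    have h2n : ((2^n : ℕ) : ℝ) = (2:ℝ)^n := by push_cast; ring
    rw [h2n, Real.log_pow]
    rw [mul_inv, ← mul_assoc, mul_inv_cancel₀ (by positivity)]
    ring_nf
  simp only [key]
  have hlog2 : (0:ℝ) < Real.log 2 := Real.log_pos one_lt_two
  have hcomp : ∀ n : ℕ, ((1 + (n:ℝ) * Real.log 2) ^ (2*β))⁻¹
      ≤ (Real.log 2 ^ (2*β))⁻¹ * (((n:ℝ)+1) ^ (2*β))⁻¹ := by
    intro n
    rw [← mul_inv, ← Real.mul_rpow (le_of_lt hlog2) (by positivity)]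
    apply inv_anti₀
    · positivity
    · apply Real.rpow_le_rpow (by positivity) _ (le_of_lt hb)
      have h2 : Real.log 2 ≤ 1 := by
        have := Real.log_le_sub_one_of_pos (by norm_num : (0:ℝ) < 2)
        linarith
      nlinarith [hlog2]
  apply Summable.of_nonneg_of_le (fun n => by positivity) hcomp
  apply Summable.mul_left
  have h1 : Summable (fun n : ℕ => ((n:ℝ) ^ (2*β))⁻¹) := Real.summable_nat_rpow_inv.2 h2β
  have := (summable_nat_add_iff 1).2 h1
  simpa using this

variable {m n : Type*} [Fintype m] [Fintype n]

lemma coord_le_norm (x : EuclideanSpace ℂ n) (j : n) : ‖x j‖ ≤ ‖x‖ := by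
  rw [EuclideanSpace.norm_eq]
  have h : ‖x j‖ = Real.sqrt (‖x j‖^2) := by rw [Real.sqrt_sq (norm_nonneg _)]
  rw [h]
  apply Real.sqrt_le_sqrt
  exact Finset.single_le_sum (f := fun i => ‖x i‖^2) (fun i _ => sq_nonneg _) (Finset.mem_univ j)

lemma euclid_apply (M : Matrix m n ℂ) (x : EuclideanSpace ℂ n) (i : m) :
    (Matrix.toEuclideanLin M x) i = ∑ j, M i j * x j := by
  rw [Matrix.toEuclideanLin_apply]
  rfl

lemma block_apply_le (M : Matrix m n ℂ) (x : EuclideanSpace ℂ n) :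
    ‖Matrix.toEuclideanLin M x‖ ≤
      ‖LinearMap.toContinuousLinearMap (Matrix.toEuclideanLin M)‖ * ‖x‖ := by
  have := (LinearMap.toContinuousLinearMap (Matrix.toEuclideanLin M)).le_opNorm x
  simpa using this

lemma row_le_opNorm (M : Matrix m n ℂ) (i : m) :
    Real.sqrt (∑ j, ‖M i j‖^2) ≤
      ‖LinearMap.toContinuousLinearMap (Matrix.toEuclideanLin M)‖ := by
  set N := ‖LinearMap.toContinuousLinearMap (Matrix.toEuclideanLin M)‖ with hN
  set r := Real.sqrt (∑ j, ‖M i j‖^2) with hr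
  have hr0 : 0 ≤ r := Real.sqrt_nonneg _
  rcases eq_or_lt_of_le hr0 with h0 | hpos
  · rw [← h0]; exact norm_nonneg _
  · set u : EuclideanSpace ℂ n := WithLp.toLp 2 (fun j => star (M i j)) with hu
    have hun : ‖u‖ = r := by
      rw [EuclideanSpace.norm_eq, hr]
      congr 1
      apply Finset.sum_congr rfl
      intro j _
      simp [hu]
    have hcoord : (Matrix.toEuclideanLin M u) i = ((∑ j, ‖M i j‖^2 : ℝ) : ℂ) := by
      rw [euclid_apply]
      push_cast
      apply Finset.sum_congr rfl
      intro j _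
      simp [hu, Complex.mul_conj']
    have h1 : (∑ j, ‖M i j‖^2 : ℝ) ≤ N * r := by
      have hc := coord_le_norm (Matrix.toEuclideanLin M u) i
      rw [hcoord] at hc
      simp only [Complex.norm_real, Real.norm_eq_abs] at hc
      have h2 : |(∑ j, ‖M i j‖^2 : ℝ)| = ∑ j, ‖M i j‖^2 := by
        apply abs_of_nonneg; positivity
      rw [h2] at hc
      calc (∑ j, ‖M i j‖^2 : ℝ) ≤ ‖Matrix.toEuclideanLin M u‖ := hc
        _ ≤ N * ‖u‖ := block_apply_le M u
        _ = N * r := by rw [hun]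
    have hrsq : r^2 = ∑ j, ‖M i j‖^2 := Real.sq_sqrt (by positivity)
    nlinarith

lemma row_sum_le (M : Matrix m n ℂ) (i : m) (x : EuclideanSpace ℂ n) :
    ∑ j, ‖M i j * x j‖ ≤
      ‖LinearMap.toContinuousLinearMap (Matrix.toEuclideanLin M)‖ * ‖x‖ := by
  have hcs : (∑ j, ‖M i j‖ * ‖x j‖)^2 ≤ (∑ j, ‖M i j‖^2) * (∑ j, ‖x j‖^2) :=
    Finset.sum_mul_sq_le_sq_mul_sq _ _ _
  have h1 : ∑ j, ‖M i j * x j‖ = ∑ j, ‖M i j‖ * ‖x j‖ := by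
    apply Finset.sum_congr rfl; intro j _; exact norm_mul _ _
  have hx : ‖x‖ = Real.sqrt (∑ j, ‖x j‖^2) := EuclideanSpace.norm_eq x
  have h2 : ∑ j, ‖M i j‖ * ‖x j‖ ≤ Real.sqrt (∑ j, ‖M i j‖^2) * Real.sqrt (∑ j, ‖x j‖^2) := by
    rw [← Real.sqrt_mul (by positivity)]
    have h3 : ∑ j, ‖M i j‖ * ‖x j‖ = Real.sqrt ((∑ j, ‖M i j‖ * ‖x j‖)^2) := by
      rw [Real.sqrt_sq (by positivity)]
    rw [h3]
    exact Real.sqrt_le_sqrt hcs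
  rw [h1, hx]
  calc ∑ j, ‖M i j‖ * ‖x j‖
      ≤ Real.sqrt (∑ j, ‖M i j‖^2) * Real.sqrt (∑ j, ‖x j‖^2) := h2
    _ ≤ ‖LinearMap.toContinuousLinearMap (Matrix.toEuclideanLin M)‖
        * Real.sqrt (∑ j, ‖x j‖^2) := by
        apply mul_le_mul_of_nonneg_right (row_le_opNorm M i) (Real.sqrt_nonneg _)

/-- Cauchy–Schwarz for infinite sums of nonnegative reals. -/
lemma tsum_cs (u v : ℕ → ℝ) (hu : ∀ k, 0 ≤ u k) (hv : ∀ k, 0 ≤ v k)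
    (h2u : Summable (fun k => u k ^ 2)) (h2v : Summable (fun k => v k ^ 2)) :
    Summable (fun k => u k * v k) ∧
      (∑' k, u k * v k)^2 ≤ (∑' k, u k ^ 2) * (∑' k, v k ^ 2) := by
  have hsum : Summable (fun k => u k * v k) := by
    apply Summable.of_nonneg_of_le (fun k => mul_nonneg (hu k) (hv k))
      (fun k => ?_) (by exact (h2u.add h2v).mul_left (1/2))
    nlinarith [sq_nonneg (u k - v k)]
  refine ⟨hsum, ?_⟩
  have hle : ∑' k, u k * v k ≤ Real.sqrt ((∑' k, u k ^ 2) * (∑' k, v k ^ 2)) := by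
    apply hsum.tsum_le_of_sum_le
    intro F
    have hcs := Finset.sum_mul_sq_le_sq_mul_sq F u v
    have hF : ∑ k ∈ F, u k * v k ≤ Real.sqrt ((∑ k ∈ F, u k ^2) * (∑ k ∈ F, v k ^2)) := by
      have := Real.sqrt_le_sqrt hcs
      rwa [Real.sqrt_sq (Finset.sum_nonneg (fun k _ => mul_nonneg (hu k) (hv k)))] at this
    refine hF.trans (Real.sqrt_le_sqrt ?_)
    apply mul_le_mul
    · exact h2u.sum_le_tsum F (fun k _ => sq_nonneg _)
    · exact h2v.sum_le_tsum F (fun k _ => sq_nonneg _)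
    · exact Finset.sum_nonneg (fun k _ => sq_nonneg _)
    · exact tsum_nonneg (fun k => sq_nonneg _)
  have h0 : 0 ≤ ∑' k, u k * v k := tsum_nonneg (fun k => mul_nonneg (hu k) (hv k))
  have := mul_self_le_mul_self h0 hle
  calc (∑' k, u k * v k)^2 = (∑' k, u k * v k) * (∑' k, u k * v k) := sq _
    _ ≤ Real.sqrt ((∑' k, u k ^ 2) * (∑' k, v k ^ 2)) *
        Real.sqrt ((∑' k, u k ^ 2) * (∑' k, v k ^ 2)) := this
    _ = (∑' k, u k ^ 2) * (∑' k, v k ^ 2) := by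
        exact Real.mul_self_sqrt
          (mul_nonneg (tsum_nonneg fun k => sq_nonneg _) (tsum_nonneg fun k => sq_nonneg _))


lemma normsq_eq (x : EuclideanSpace ℂ n) : ‖x‖^2 = ∑ i, ‖x i‖^2 := by
  rw [EuclideanSpace.norm_eq, Real.sq_sqrt (Finset.sum_nonneg fun i _ => sq_nonneg _)]

noncomputable def xiBlk (d : ℕ) (ξ : IndexE d → ℂ) (k : ℕ) :
    EuclideanSpace ℂ (Fin (hermiteDim d (d + 2 * k))) := WithLp.toLp 2 (fun i => ξ ⟨k, i⟩)

noncomputable def Ablk (d : ℕ) (A : IndexE d → IndexE d → ℂ) (k k' : ℕ) :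
    Matrix (Fin (hermiteDim d (d + 2 * k))) (Fin (hermiteDim d (d + 2 * k'))) ℂ :=
  Matrix.of fun i i' => A ⟨k, i⟩ ⟨k', i'⟩

lemma blockNorm_eq (d : ℕ) (A : IndexE d → IndexE d → ℂ) (k k' : ℕ) :
    blockNorm d A k k' =
      ‖LinearMap.toContinuousLinearMap (Matrix.toEuclideanLin (Ablk d A k k'))‖ := rfl

noncomputable def Fblk (d : ℕ) (A : IndexE d → IndexE d → ℂ) (ξ : IndexE d → ℂ) (k k' : ℕ) :
    EuclideanSpace ℂ (Fin (hermiteDim d (d + 2 * k))) :=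
  Matrix.toEuclideanLin (Ablk d A k k') (xiBlk d ξ k')

lemma Fblk_norm_le (d : ℕ) (A : IndexE d → IndexE d → ℂ) (ξ : IndexE d → ℂ) (k k' : ℕ) :
    ‖Fblk d A ξ k k'‖ ≤ blockNorm d A k k' * ‖xiBlk d ξ k'‖ := by
  rw [blockNorm_eq]; exact block_apply_le _ _

lemma Fblk_apply (d : ℕ) (A : IndexE d → IndexE d → ℂ) (ξ : IndexE d → ℂ) (k k' : ℕ)
    (i : Fin (hermiteDim d (d + 2 * k))) :
    (Fblk d A ξ k k') i = ∑ i', A ⟨k, i⟩ ⟨k', i'⟩ * ξ ⟨k', i'⟩ :=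
  euclid_apply (Ablk d A k k') (xiBlk d ξ k') i

lemma rowsum_le (d : ℕ) (A : IndexE d → IndexE d → ℂ) (ξ : IndexE d → ℂ) (k k' : ℕ)
    (i : Fin (hermiteDim d (d + 2 * k))) :
    ∑ i', ‖A ⟨k, i⟩ ⟨k', i'⟩ * ξ ⟨k', i'⟩‖ ≤ blockNorm d A k k' * ‖xiBlk d ξ k'‖ := by
  rw [blockNorm_eq]; exact row_sum_le (Ablk d A k k') i (xiBlk d ξ k')

end Stmt8Aux


open Stmt8Aux in
theorem stmt8 (d : ℕ) (hd : 1 ≤ d) (β s : ℝ) (hβ : 1 / 2 < β) (hs : 1 ≤ s) :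
    ∃ C > 0, ∀ (A : IndexE d → IndexE d → ℂ) (MA : ℝ),
      (∀ k k', wtBeta d β k k' * blockNorm d A k k' ≤ MA) →
      ∀ ξ : IndexE d → ℂ,
        Summable (fun a : IndexE d => (wE d a : ℝ) ^ s * ‖ξ a‖ ^ 2) →
        (∀ a : IndexE d, Summable (fun b : IndexE d => ‖A a b * ξ b‖)) ∧
        Summable (fun a : IndexE d =>
          (wE d a : ℝ) ^ (-s) * ‖∑' b : IndexE d, A a b * ξ b‖ ^ 2) ∧
        ∑' a : IndexE d, (wE d a : ℝ) ^ (-s) * ‖∑' b : IndexE d, A a b * ξ b‖ ^ 2 ≤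
          C ^ 2 * MA ^ 2 * ∑' a : IndexE d, (wE d a : ℝ) ^ s * ‖ξ a‖ ^ 2 := by
  classical
  set sfun : ℕ → ℝ := fun n => ((n : ℝ) * (1 + Real.log n) ^ (2*β))⁻¹ with hsfun
  have Ssummable : Summable sfun := logSeries_summable hβ
  have hsfun_nonneg : ∀ n, 0 ≤ sfun n := by
    intro n
    have : (0:ℝ) ≤ (n:ℝ) := Nat.cast_nonneg n
    positivity
  set S := ∑' n, sfun n with hSdef
  have hS1 : 1 ≤ S := by
    have h1 : sfun 1 = 1 := by simp [hsfun]
    have h := Ssummable.le_tsum 1 (fun i _ => hsfun_nonneg i)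
    rw [h1] at h
    exact h
  have hS0 : 0 < S := by linarith
  refine ⟨S, hS0, ?_⟩
  intro A MA hMA ξ hξ
  -- basic quantities
  set w : ℕ → ℝ := fun k => (d:ℝ) + 2*k with hwdef
  have hw1 : ∀ k, 1 ≤ w k := by
    intro k
    have h1 : (1:ℝ) ≤ (d:ℝ) := by exact_mod_cast hd
    have h2 : (0:ℝ) ≤ (k:ℝ) := Nat.cast_nonneg k
    show (1:ℝ) ≤ (d:ℝ) + 2*k
    linarith
  have hw0 : ∀ k, 0 < w k := fun k => lt_of_lt_of_le one_pos (hw1 k)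
  have hwE : ∀ (k : ℕ) (i : Fin (hermiteDim d (d + 2*k))),
      ((wE d ⟨k, i⟩ : ℕ) : ℝ) = w k := by
    intro k i; show ((d + 2*k : ℕ) : ℝ) = (d:ℝ) + 2*k; push_cast; ring
  set L : ℕ → ℝ := fun k => (1 + Real.log (w k)) ^ β with hLdef
  have hlogw : ∀ k, 0 ≤ Real.log (w k) := fun k => Real.log_nonneg (hw1 k)
  have hL1 : ∀ k, 1 ≤ L k := by
    intro k
    apply Real.one_le_rpow (by linarith [hlogw k]) (by linarith)
  have hL0 : ∀ k, 0 < L k := fun k => lt_of_lt_of_le one_pos (hL1 k)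
  have hMA0 : 0 ≤ MA := by
    refine le_trans ?_ (hMA 0 0)
    have h1 : 0 ≤ wtBeta d β 0 0 := by
      unfold wtBeta
      have := hlogw 0
      simp only [hwdef] at this
      positivity
    have h2 : 0 ≤ blockNorm d A 0 0 := norm_nonneg _
    positivity
  -- blockNorm bound
  have hBN : ∀ k k', blockNorm d A k k' ≤ MA * (L k)⁻¹ * (L k')⁻¹ := by
    intro k k'
    have h := hMA k k'
    have hwt : wtBeta d β k k' = L k * L k' := by
      simp [wtBeta, hLdef, hwdef]
    rw [hwt] at h
    have hpos : 0 < L k * L k' := mul_pos (hL0 k) (hL0 k')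
    have h2 := mul_le_mul_of_nonneg_left h (le_of_lt (inv_pos.2 hpos))
    have hL : (L k * L k')⁻¹ * (L k * L k' * blockNorm d A k k') = blockNorm d A k k' := by
      rw [← mul_assoc, inv_mul_cancel₀ hpos.ne', one_mul]
    have hR : (L k * L k')⁻¹ * MA = MA * (L k)⁻¹ * (L k')⁻¹ := by
      rw [mul_inv]; ring
    rw [hL, hR] at h2
    exact h2
  -- block norms of ξ
  set η : ℕ → ℝ := fun k => ‖xiBlk d ξ k‖ with hηdef
  have hη0 : ∀ k, 0 ≤ η k := fun k => norm_nonneg _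
  have hηsq : ∀ k, η k ^ 2 = ∑ i, ‖ξ ⟨k, i⟩‖^2 := by
    intro k
    exact normsq_eq (xiBlk d ξ k)
  -- decompose the summability hypothesis into blocks
  have hξnn : ∀ a : IndexE d, 0 ≤ (wE d a : ℝ) ^ s * ‖ξ a‖ ^ 2 := by
    intro a
    have : (0:ℝ) ≤ (wE d a : ℝ) := Nat.cast_nonneg _
    positivity
  obtain ⟨hfib, hsumfib⟩ := (summable_sigma_of_nonneg hξnn).1 hξ
  have hfibeq : ∀ k, (∑' i : Fin (hermiteDim d (d + 2*k)),
      ((wE d ⟨k, i⟩ : ℕ) : ℝ) ^ s * ‖ξ ⟨k, i⟩‖ ^ 2) = w k ^ s * η k ^ 2 := by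
    intro k
    rw [tsum_fintype, hηsq, Finset.mul_sum]
    apply Finset.sum_congr rfl
    intro i _
    rw [hwE]
  have hNsum : Summable (fun k => w k ^ s * η k ^ 2) := hsumfib.congr hfibeq
  set Nsq := ∑' a : IndexE d, (wE d a : ℝ) ^ s * ‖ξ a‖ ^ 2 with hNdef
  have hNsq0 : 0 ≤ Nsq := tsum_nonneg hξnn
  have hNeq : Nsq = ∑' k, w k ^ s * η k ^ 2 := by
    rw [hNdef, hξ.tsum_sigma]
    exact tsum_congr hfibeq
  -- the comparison sequence cfun
  set cfun : ℕ → ℝ := fun k => w k ^ (-s) * (L k ^ 2)⁻¹ with hcdef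
  have hc0 : ∀ k, 0 ≤ cfun k := by
    intro k
    have h1 := hw0 k
    have h2 := hL0 k
    positivity
  have hcle : ∀ k, cfun k ≤ sfun (d + 2*k) := by
    intro k
    have hcast : ((d + 2*k : ℕ) : ℝ) = w k := by rw [hwdef]; push_cast; ring
    have hL2 : L k ^ 2 = (1 + Real.log (w k)) ^ (2*β) := by
      rw [hLdef]
      rw [← Real.rpow_natCast ((1 + Real.log (w k)) ^ β) 2,
        ← Real.rpow_mul (by linarith [hlogw k])]
      norm_num
      ring_nf
    have hws : w k ^ (-s) ≤ (w k)⁻¹ := by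
      rw [← Real.rpow_neg_one (w k)]
      exact Real.rpow_le_rpow_of_exponent_le (hw1 k) (by linarith)
    have hsfk : sfun (d + 2*k) = (w k * (1 + Real.log (w k)) ^ (2*β))⁻¹ := by
      simp only [hsfun]
      rw [hcast]
    calc cfun k = w k ^ (-s) * ((1 + Real.log (w k)) ^ (2*β))⁻¹ := by
          simp only [hcdef]; rw [hL2]
      _ ≤ (w k)⁻¹ * ((1 + Real.log (w k)) ^ (2*β))⁻¹ := by
          apply mul_le_mul_of_nonneg_right hws
          have h3 : (0:ℝ) < (1 + Real.log (w k)) ^ (2*β) :=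
            Real.rpow_pos_of_pos (by linarith [hlogw k]) _
          positivity
      _ = (w k * (1 + Real.log (w k)) ^ (2*β))⁻¹ := by rw [mul_inv]
      _ = sfun (d + 2*k) := hsfk.symm
  have hinj : Function.Injective (fun k : ℕ => d + 2*k) := by
    intro a b hab
    simp only at hab
    omega
  have hsc : Summable (fun k => sfun (d + 2*k)) := Ssummable.comp_injective hinj
  have hcsum : Summable cfun := Summable.of_nonneg_of_le hc0 hcle hsc
  have hctsum : ∑' k, cfun k ≤ S := by
    rw [hSdef]
    exact hcsum.tsum_le_tsum_of_inj _ hinj (fun c _ => hsfun_nonneg c) hcle Ssummable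
  -- Cauchy-Schwarz : T := ∑' (L k)⁻¹ η k satisfies T² ≤ S * Nsq
  set u : ℕ → ℝ := fun k => Real.sqrt (cfun k) with hudef
  set v : ℕ → ℝ := fun k => Real.sqrt (w k ^ s * η k ^ 2) with hvdef
  have hu2 : (fun k => u k ^ 2) = cfun := by
    funext k
    exact Real.sq_sqrt (hc0 k)
  have hv2 : (fun k => v k ^ 2) = fun k => w k ^ s * η k ^ 2 := by
    funext k
    apply Real.sq_sqrt
    have h1 := hw0 k
    positivity
  have huv : ∀ k, u k * v k = (L k)⁻¹ * η k := by
    intro k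
    rw [hudef, hvdef]
    simp only
    rw [← Real.sqrt_mul (hc0 k)]
    have hws : w k ^ (-s) * w k ^ s = 1 := by
      rw [← Real.rpow_add (hw0 k)]
      norm_num
    have key : cfun k * (w k ^ s * η k ^ 2) = ((L k)⁻¹ * η k)^2 := by
      have expand : cfun k * (w k ^ s * η k ^ 2)
          = (w k ^ (-s) * w k ^ s) * ((L k ^ 2)⁻¹ * η k ^ 2) := by
        simp only [hcdef]; ring
      rw [expand, hws, one_mul, mul_pow, inv_pow]
    rw [key, Real.sqrt_sq (mul_nonneg (inv_nonneg.2 (hL0 k).le) (hη0 k))]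
  have hcs := tsum_cs u v (fun k => Real.sqrt_nonneg _) (fun k => Real.sqrt_nonneg _)
    (by rw [hu2]; exact hcsum) (by rw [hv2]; exact hNsum)
  have hTsum : Summable (fun k => (L k)⁻¹ * η k) := hcs.1.congr huv
  set T := ∑' k, (L k)⁻¹ * η k with hTdef
  have hT0 : 0 ≤ T := by
    apply tsum_nonneg
    intro k
    have := hL0 k
    have := hη0 k
    positivity
  have hT2 : T ^ 2 ≤ S * Nsq := by
    have h2 := hcs.2
    have h1 : ∑' k, u k * v k = T := tsum_congr huv
    rw [h1, hu2, hv2] at h2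
    have h3 : ∑' k, cfun k ≤ S := hctsum
    have h4 : (∑' k, w k ^ s * η k ^ 2) = Nsq := hNeq.symm
    rw [h4] at h2
    have h5 : (∑' k, cfun k) * Nsq ≤ S * Nsq :=
      mul_le_mul_of_nonneg_right h3 hNsq0
    linarith
  -- bounds on the blocks of A ξ
  have hFnorm : ∀ k k', ‖Fblk d A ξ k k'‖ ≤ MA * (L k)⁻¹ * ((L k')⁻¹ * η k') := by
    intro k k'
    calc ‖Fblk d A ξ k k'‖ ≤ blockNorm d A k k' * η k' := Fblk_norm_le d A ξ k k'
      _ ≤ (MA * (L k)⁻¹ * (L k')⁻¹) * η k' :=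
          mul_le_mul_of_nonneg_right (hBN k k') (hη0 k')
      _ = MA * (L k)⁻¹ * ((L k')⁻¹ * η k') := by ring
  have hrow : ∀ (k : ℕ) (i : Fin (hermiteDim d (d + 2*k))) (k' : ℕ),
      (∑ i', ‖A ⟨k, i⟩ ⟨k', i'⟩ * ξ ⟨k', i'⟩‖) ≤ MA * (L k)⁻¹ * ((L k')⁻¹ * η k') := by
    intro k i k'
    calc (∑ i', ‖A ⟨k, i⟩ ⟨k', i'⟩ * ξ ⟨k', i'⟩‖)
        ≤ blockNorm d A k k' * η k' := rowsum_le d A ξ k k' i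
      _ ≤ (MA * (L k)⁻¹ * (L k')⁻¹) * η k' :=
          mul_le_mul_of_nonneg_right (hBN k k') (hη0 k')
      _ = MA * (L k)⁻¹ * ((L k')⁻¹ * η k') := by ring
  have hTsum' : ∀ k : ℕ, Summable (fun k' => MA * (L k)⁻¹ * ((L k')⁻¹ * η k')) :=
    fun k => hTsum.mul_left _
  -- absolute convergence of each row
  have habs : ∀ a : IndexE d, Summable (fun b : IndexE d => ‖A a b * ξ b‖) := by
    rintro ⟨k, i⟩
    apply (summable_sigma_of_nonneg (fun b => norm_nonneg _)).2
    refine ⟨fun k' => Summable.of_finite, ?_⟩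
    apply Summable.of_nonneg_of_le
      (fun k' => tsum_nonneg fun i' => norm_nonneg _) (fun k' => ?_) (hTsum' k)
    rw [tsum_fintype]
    exact hrow k i k'
  refine ⟨habs, ?_⟩
  -- the vector of the k-th block of A ξ
  have hFnormsum : ∀ k, Summable (fun k' => ‖Fblk d A ξ k k'‖) := by
    intro k
    exact Summable.of_nonneg_of_le (fun k' => norm_nonneg _) (fun k' => hFnorm k k') (hTsum' k)
  have hFsum : ∀ k, Summable (fun k' => Fblk d A ξ k k') := fun k => (hFnormsum k).of_norm
  set G : ∀ k : ℕ, EuclideanSpace ℂ (Fin (hermiteDim d (d + 2*k))) :=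
    fun k => ∑' k', Fblk d A ξ k k' with hGdef
  have hg : ∀ (k : ℕ) (i : Fin (hermiteDim d (d + 2*k))),
      (∑' b : IndexE d, A ⟨k, i⟩ b * ξ b) = G k i := by
    intro k i
    have hsb : Summable (fun b : IndexE d => A ⟨k, i⟩ b * ξ b) := (habs ⟨k, i⟩).of_norm
    rw [hsb.tsum_sigma]
    have h1 : ∀ k', (∑' i', A ⟨k, i⟩ ⟨k', i'⟩ * ξ ⟨k', i'⟩) = (Fblk d A ξ k k') i := by
      intro k'
      rw [tsum_fintype, Fblk_apply]
    rw [tsum_congr h1]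
    have h2 := (EuclideanSpace.proj i (𝕜 := ℂ)).map_tsum (hFsum k)
    exact h2.symm
  have hGnormsq : ∀ k, ∑ i, ‖G k i‖^2 = ‖G k‖^2 := fun k => (normsq_eq (G k)).symm
  have hGnorm : ∀ k, ‖G k‖ ≤ MA * (L k)⁻¹ * T := by
    intro k
    calc ‖G k‖ ≤ ∑' k', ‖Fblk d A ξ k k'‖ := norm_tsum_le_tsum_norm (hFnormsum k)
      _ ≤ ∑' k', MA * (L k)⁻¹ * ((L k')⁻¹ * η k') :=
          (hFnormsum k).tsum_le_tsum (hFnorm k) (hTsum' k)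
      _ = MA * (L k)⁻¹ * T := tsum_mul_left
  -- the final estimate
  have hgnn : ∀ a : IndexE d, 0 ≤ (wE d a : ℝ)^(-s) * ‖∑' b : IndexE d, A a b * ξ b‖^2 := by
    intro a
    have : (0:ℝ) ≤ (wE d a : ℝ) := Nat.cast_nonneg _
    positivity
  have hfibg : ∀ k : ℕ, (∑' i : Fin (hermiteDim d (d + 2*k)),
      ((wE d ⟨k, i⟩ : ℕ) : ℝ)^(-s) * ‖∑' b : IndexE d, A ⟨k, i⟩ b * ξ b‖^2)
      = w k ^ (-s) * ‖G k‖^2 := by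
    intro k
    rw [tsum_fintype, ← hGnormsq, Finset.mul_sum]
    apply Finset.sum_congr rfl
    intro i _
    rw [hwE, hg]
  have hbound : ∀ k, w k ^ (-s) * ‖G k‖^2 ≤ (MA^2 * T^2) * cfun k := by
    intro k
    have h1 : ‖G k‖^2 ≤ (MA * (L k)⁻¹ * T)^2 :=
      pow_le_pow_left₀ (norm_nonneg _) (hGnorm k) 2
    have h2 : w k ^ (-s) * (MA * (L k)⁻¹ * T)^2 = (MA^2 * T^2) * cfun k := by
      simp only [hcdef]
      rw [mul_pow, mul_pow, inv_pow]
      ring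
    calc w k ^ (-s) * ‖G k‖^2 ≤ w k ^ (-s) * (MA * (L k)⁻¹ * T)^2 :=
          mul_le_mul_of_nonneg_left h1 (Real.rpow_nonneg (hw0 k).le _)
      _ = (MA^2 * T^2) * cfun k := h2
  have hGnn : ∀ k, 0 ≤ w k ^ (-s) * ‖G k‖^2 := by
    intro k
    have := hw0 k
    positivity
  have hGsummand : Summable (fun k => w k ^ (-s) * ‖G k‖^2) :=
    Summable.of_nonneg_of_le hGnn hbound (hcsum.mul_left _)
  have hsum2 : Summable (fun a : IndexE d =>
      (wE d a : ℝ)^(-s) * ‖∑' b : IndexE d, A a b * ξ b‖^2) := by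
    apply (summable_sigma_of_nonneg hgnn).2
    refine ⟨fun k => Summable.of_finite, ?_⟩
    apply Summable.of_nonneg_of_le
      (fun k => tsum_nonneg fun i => hgnn ⟨k, i⟩) (fun k => ?_) (hcsum.mul_left (MA^2 * T^2))
    rw [hfibg k]
    exact hbound k
  refine ⟨hsum2, ?_⟩
  rw [hsum2.tsum_sigma]
  have hstep1 : (∑' k : ℕ, ∑' i : Fin (hermiteDim d (d + 2*k)),
      ((wE d ⟨k, i⟩ : ℕ) : ℝ)^(-s) * ‖∑' b : IndexE d, A ⟨k, i⟩ b * ξ b‖^2)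
      ≤ ∑' k, (MA^2 * T^2) * cfun k := by
    apply Summable.tsum_le_tsum (fun k => ?_) (hGsummand.congr (fun k => (hfibg k).symm))
      (hcsum.mul_left _)
    rw [hfibg k]
    exact hbound k
  have hstep2 : (∑' k, (MA^2 * T^2) * cfun k) = (MA^2 * T^2) * ∑' k, cfun k :=
    tsum_mul_left
  have hcnn : 0 ≤ ∑' k, cfun k := tsum_nonneg hc0
  calc (∑' k : ℕ, ∑' i : Fin (hermiteDim d (d + 2*k)),
      ((wE d ⟨k, i⟩ : ℕ) : ℝ)^(-s) * ‖∑' b : IndexE d, A ⟨k, i⟩ b * ξ b‖^2)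
      ≤ (MA^2 * T^2) * ∑' k, cfun k := by rw [← hstep2]; exact hstep1
    _ ≤ S ^ 2 * MA ^ 2 * Nsq := by
        have h1 : MA^2 * T^2 * ∑' k, cfun k ≤ MA^2 * T^2 * S :=
          mul_le_mul_of_nonneg_left hctsum (by positivity)
        have h2 : MA^2 * T^2 * S ≤ MA^2 * (S * Nsq) * S :=
          mul_le_mul_of_nonneg_right
            (mul_le_mul_of_nonneg_left hT2 (sq_nonneg MA)) hS0.le
        have h3 : MA^2 * (S * Nsq) * S = S ^ 2 * MA ^ 2 * Nsq := by ring
        linarith
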